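/- Let n, k, j be integers with 1 ≤ j ≤ k and n > 2k. Then the 4×4 real matrix M whose rows (indexed ∅, c, d, cd) and columns (indexed −, v, 0, +) are given by: row ∅ = ( sqrt((n−k−j+1)(n−k−j)/((n−2j+2)(n−2j+1))), 0, sqrt(2(k−j+1)(n−k−j)/((n−2j+2)(n−2j))), sqrt((k−j+1)(k−j)/((n−2j+1)(n−2j))) ); row c = ( sqrt((k−j+1)(n−k−j+1)/((n−2j+2)(n−2j+1))), 1/sqrt(2), −(n−2k)/sqrt(2(n−2j+2)(n−2j)), −sqrt((k−j)(n−k−j)/((n−2j+1)(n−2j))) ); row d = ( sqrt((k−j+1)(n−k−j+1)/((n−2j+2)(n−2j+1))), −1/sqrt(2), −(n−2k)/sqrt(2(n−2j+2)(n−2j)), −sqrt((k−j)(n−k−j)/((n−2j+1)(n−2j))) ); row cd = ( sqrt((k−j+1)(k−j)/((n−2j+2)(n−2j+1))), 0, −sqrt(2(k−j)(n−k−j+1)/((n−2j+2)(n−2j))), sqrt((n−k−j+1)(n−k−j)/((n−2j+1)(n−2j))) ); is an orthogonal matrix, i.e., MᵀM = I₄ (equivalently, its columns form an orthonormal basis of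 ℝ⁴). -/

import Mathlib

open Real Matrix

/-- The change-of-basis matrix between the orthonormal systems `{v_−, v, v_0, v_+}`
and `{w_∅, w_c, w_d, w_{cd}}` (rows indexed `∅, c, d, cd`; columns indexed `−, v, 0, +`). -/
noncomputable def changeOfBasisMatrix (n k j : ℤ) : Matrix (Fin 4) (Fin 4) ℝ :=
  Matrix.of
    ![![Real.sqrt ((((n:ℝ) - k - j + 1) * ((n:ℝ) - k - j)) / (((n:ℝ) - 2*j + 2) * ((n:ℝ) - 2*j + 1))),
        0,
        Real.sqrt ((2 * ((k:ℝ) - j + 1) * ((n:ℝ) - k - j)) / (((n:ℝ) - 2*j + 2) * ((n:ℝ) - 2*j))),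
        Real.sqrt ((((k:ℝ) - j + 1) * ((k:ℝ) - j)) / (((n:ℝ) - 2*j + 1) * ((n:ℝ) - 2*j)))],
      ![Real.sqrt ((((k:ℝ) - j + 1) * ((n:ℝ) - k - j + 1)) / (((n:ℝ) - 2*j + 2) * ((n:ℝ) - 2*j + 1))),
        1 / Real.sqrt 2,
        -(((n:ℝ) - 2*k) / Real.sqrt (2 * ((n:ℝ) - 2*j + 2) * ((n:ℝ) - 2*j))),
        -Real.sqrt ((((k:ℝ) - j) * ((n:ℝ) - k - j)) / (((n:ℝ) - 2*j + 1) * ((n:ℝ) - 2*j)))],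
      ![Real.sqrt ((((k:ℝ) - j + 1) * ((n:ℝ) - k - j + 1)) / (((n:ℝ) - 2*j + 2) * ((n:ℝ) - 2*j + 1))),
        -(1 / Real.sqrt 2),
        -(((n:ℝ) - 2*k) / Real.sqrt (2 * ((n:ℝ) - 2*j + 2) * ((n:ℝ) - 2*j))),
        -Real.sqrt ((((k:ℝ) - j) * ((n:ℝ) - k - j)) / (((n:ℝ) - 2*j + 1) * ((n:ℝ) - 2*j)))],
      ![Real.sqrt ((((k:ℝ) - j + 1) * ((k:ℝ) - j)) / (((n:ℝ) - 2*j + 2) * ((n:ℝ) - 2*j + 1))),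
        0,
        -Real.sqrt ((2 * ((k:ℝ) - j) * ((n:ℝ) - k - j + 1)) / (((n:ℝ) - 2*j + 2) * ((n:ℝ) - 2*j))),
        Real.sqrt ((((n:ℝ) - k - j + 1) * ((n:ℝ) - k - j)) / (((n:ℝ) - 2*j + 1) * ((n:ℝ) - 2*j)))]]

set_option maxHeartbeats 1000000 in
private theorem mul_fin_four' {α : Type*} [AddCommMonoid α] [Mul α]
    (a₁₁ a₁₂ a₁₃ a₁₄ a₂₁ a₂₂ a₂₃ a₂₄ a₃₁ a₃₂ a₃₃ a₃₄ a₄₁ a₄₂ a₄₃ a₄₄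
     b₁₁ b₁₂ b₁₃ b₁₄ b₂₁ b₂₂ b₂₃ b₂₄ b₃₁ b₃₂ b₃₃ b₃₄ b₄₁ b₄₂ b₄₃ b₄₄ : α) :
    !![a₁₁, a₁₂, a₁₃, a₁₄;
       a₂₁, a₂₂, a₂₃, a₂₄;
       a₃₁, a₃₂, a₃₃, a₃₄;
       a₄₁, a₄₂, a₄₃, a₄₄] * !![b₁₁, b₁₂, b₁₃, b₁₄;
                                b₂₁, b₂₂, b₂₃, b₂₄;
                                b₃₁, b₃₂, b₃₃, b₃₄;
                                b₄₁, b₄₂, b₄₃, b₄₄] =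
    !![a₁₁*b₁₁ + a₁₂*b₂₁ + a₁₃*b₃₁ + a₁₄*b₄₁, a₁₁*b₁₂ + a₁₂*b₂₂ + a₁₃*b₃₂ + a₁₄*b₄₂,
         a₁₁*b₁₃ + a₁₂*b₂₃ + a₁₃*b₃₃ + a₁₄*b₄₃, a₁₁*b₁₄ + a₁₂*b₂₄ + a₁₃*b₃₄ + a₁₄*b₄₄;
       a₂₁*b₁₁ + a₂₂*b₂₁ + a₂₃*b₃₁ + a₂₄*b₄₁, a₂₁*b₁₂ + a₂₂*b₂₂ + a₂₃*b₃₂ + a₂₄*b₄₂,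
         a₂₁*b₁₃ + a₂₂*b₂₃ + a₂₃*b₃₃ + a₂₄*b₄₃, a₂₁*b₁₄ + a₂₂*b₂₄ + a₂₃*b₃₄ + a₂₄*b₄₄;
       a₃₁*b₁₁ + a₃₂*b₂₁ + a₃₃*b₃₁ + a₃₄*b₄₁, a₃₁*b₁₂ + a₃₂*b₂₂ + a₃₃*b₃₂ + a₃₄*b₄₂,
         a₃₁*b₁₃ + a₃₂*b₂₃ + a₃₃*b₃₃ + a₃₄*b₄₃, a₃₁*b₁₄ + a₃₂*b₂₄ + a₃₃*b₃₄ + a₃₄*b₄₄;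
       a₄₁*b₁₁ + a₄₂*b₂₁ + a₄₃*b₃₁ + a₄₄*b₄₁, a₄₁*b₁₂ + a₄₂*b₂₂ + a₄₃*b₃₂ + a₄₄*b₄₂,
         a₄₁*b₁₃ + a₄₂*b₂₃ + a₄₃*b₃₃ + a₄₄*b₄₃, a₄₁*b₁₄ + a₄₂*b₂₄ + a₄₃*b₃₄ + a₄₄*b₄₄] := by
  ext i j
  fin_cases i <;> fin_cases j <;>
    simp [Matrix.mul_apply, Fin.sum_univ_succ, ← add_assoc]

private theorem one_fin_four' {α : Type*} [Zero α] [One α] :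
    (1 : Matrix (Fin 4) (Fin 4) α) = !![1,0,0,0; 0,1,0,0; 0,0,1,0; 0,0,0,1] := by
  ext i j
  fin_cases i <;> fin_cases j <;> rfl

private theorem transpose_fin_four' {α : Type*}
    (a₁₁ a₁₂ a₁₃ a₁₄ a₂₁ a₂₂ a₂₃ a₂₄ a₃₁ a₃₂ a₃₃ a₃₄ a₄₁ a₄₂ a₄₃ a₄₄ : α) :
    !![a₁₁, a₁₂, a₁₃, a₁₄;
       a₂₁, a₂₂, a₂₃, a₂₄;
       a₃₁, a₃₂, a₃₃, a₃₄;
       a₄₁, a₄₂, a₄₃, a₄₄]ᵀ =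
    !![a₁₁, a₂₁, a₃₁, a₄₁;
       a₁₂, a₂₂, a₃₂, a₄₂;
       a₁₃, a₂₃, a₃₃, a₄₃;
       a₁₄, a₂₄, a₃₄, a₄₄] := by
  ext i j
  fin_cases i <;> fin_cases j <;> rfl

private theorem mat4_eq' {α : Type*} {a₁₁ a₁₂ a₁₃ a₁₄ a₂₁ a₂₂ a₂₃ a₂₄ a₃₁ a₃₂ a₃₃ a₃₄ a₄₁ a₄₂ a₄₃ a₄₄
     b₁₁ b₁₂ b₁₃ b₁₄ b₂₁ b₂₂ b₂₃ b₂₄ b₃₁ b₃₂ b₃₃ b₃₄ b₄₁ b₄₂ b₄₃ b₄₄ : α}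
    (h11 : a₁₁ = b₁₁) (h12 : a₁₂ = b₁₂) (h13 : a₁₃ = b₁₃) (h14 : a₁₄ = b₁₄)
    (h21 : a₂₁ = b₂₁) (h22 : a₂₂ = b₂₂) (h23 : a₂₃ = b₂₃) (h24 : a₂₄ = b₂₄)
    (h31 : a₃₁ = b₃₁) (h32 : a₃₂ = b₃₂) (h33 : a₃₃ = b₃₃) (h34 : a₃₄ = b₃₄)
    (h41 : a₄₁ = b₄₁) (h42 : a₄₂ = b₄₂) (h43 : a₄₃ = b₄₃) (h44 : a₄₄ = b₄₄) :
    !![a₁₁, a₁₂, a₁₃, a₁₄; a₂₁, a₂₂, a₂₃, a₂₄; a₃₁, a₃₂, a₃₃, a₃₄; a₄₁, a₄₂, a₄₃, a₄₄] =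
    !![b₁₁, b₁₂, b₁₃, b₁₄; b₂₁, b₂₂, b₂₃, b₂₄; b₃₁, b₃₂, b₃₃, b₃₄; b₄₁, b₄₂, b₄₃, b₄₄] := by
  subst_vars; rfl

set_option maxHeartbeats 2000000 in
private theorem key' (a b : ℝ) (ha : 0 ≤ a) (hab : a + 1 ≤ b) :
    (Matrix.of
    ![![Real.sqrt ((b+1)*b/((a+b+2)*(a+b+1))), 0, Real.sqrt (2*(a+1)*b/((a+b+2)*(a+b))), Real.sqrt ((a+1)*a/((a+b+1)*(a+b)))],
      ![Real.sqrt ((a+1)*(b+1)/((a+b+2)*(a+b+1))), 1/Real.sqrt 2, -((b-a)/Real.sqrt (2*(a+b+2)*(a+b))), -Real.sqrt (a*b/((a+b+1)*(a+b)))],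
      ![Real.sqrt ((a+1)*(b+1)/((a+b+2)*(a+b+1))), -(1/Real.sqrt 2), -((b-a)/Real.sqrt (2*(a+b+2)*(a+b))), -Real.sqrt (a*b/((a+b+1)*(a+b)))],
      ![Real.sqrt ((a+1)*a/((a+b+2)*(a+b+1))), 0, -Real.sqrt (2*a*(b+1)/((a+b+2)*(a+b))), Real.sqrt ((b+1)*b/((a+b+1)*(a+b)))]] : Matrix (Fin 4) (Fin 4) ℝ)ᵀ *
    Matrix.of
    ![![Real.sqrt ((b+1)*b/((a+b+2)*(a+b+1))), 0, Real.sqrt (2*(a+1)*b/((a+b+2)*(a+b))), Real.sqrt ((a+1)*a/((a+b+1)*(a+b)))],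
      ![Real.sqrt ((a+1)*(b+1)/((a+b+2)*(a+b+1))), 1/Real.sqrt 2, -((b-a)/Real.sqrt (2*(a+b+2)*(a+b))), -Real.sqrt (a*b/((a+b+1)*(a+b)))],
      ![Real.sqrt ((a+1)*(b+1)/((a+b+2)*(a+b+1))), -(1/Real.sqrt 2), -((b-a)/Real.sqrt (2*(a+b+2)*(a+b))), -Real.sqrt (a*b/((a+b+1)*(a+b)))],
      ![Real.sqrt ((a+1)*a/((a+b+2)*(a+b+1))), 0, -Real.sqrt (2*a*(b+1)/((a+b+2)*(a+b))), Real.sqrt ((b+1)*b/((a+b+1)*(a+b)))]] = 1 := by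
  have hb : (0:ℝ) < b := by linarith
  have h0 : (0:ℝ) < a + b := by linarith
  have h1 : (0:ℝ) < a + b + 1 := by linarith
  have h2 : (0:ℝ) < a + b + 2 := by linarith
  have eA : Real.sqrt ((b+1)*b/((a+b+2)*(a+b+1)))
      = Real.sqrt (b+1)*Real.sqrt b/(Real.sqrt (a+b+2)*Real.sqrt (a+b+1)) := by
    rw [Real.sqrt_div (by nlinarith), Real.sqrt_mul (by linarith), Real.sqrt_mul (by linarith)]
  have eB : Real.sqrt ((a+1)*(b+1)/((a+b+2)*(a+b+1)))
      = Real.sqrt (a+1)*Real.sqrt (b+1)/(Real.sqrt (a+b+2)*Real.sqrt (a+b+1)) := by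
    rw [Real.sqrt_div (by nlinarith), Real.sqrt_mul (by linarith), Real.sqrt_mul (by linarith)]
  have eC : Real.sqrt ((a+1)*a/((a+b+2)*(a+b+1)))
      = Real.sqrt (a+1)*Real.sqrt a/(Real.sqrt (a+b+2)*Real.sqrt (a+b+1)) := by
    rw [Real.sqrt_div (by nlinarith), Real.sqrt_mul (by linarith), Real.sqrt_mul (by linarith)]
  have eD : Real.sqrt (2*(a+1)*b/((a+b+2)*(a+b)))
      = Real.sqrt 2*Real.sqrt (a+1)*Real.sqrt b/(Real.sqrt (a+b+2)*Real.sqrt (a+b)) := by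
    rw [Real.sqrt_div (by nlinarith), Real.sqrt_mul (by linarith) b,
        Real.sqrt_mul (by norm_num) (a+1), Real.sqrt_mul (by linarith)]
  have eE : Real.sqrt (2*a*(b+1)/((a+b+2)*(a+b)))
      = Real.sqrt 2*Real.sqrt a*Real.sqrt (b+1)/(Real.sqrt (a+b+2)*Real.sqrt (a+b)) := by
    rw [Real.sqrt_div (by nlinarith), Real.sqrt_mul (by linarith) (b+1),
        Real.sqrt_mul (by norm_num) a, Real.sqrt_mul (by linarith)]
  have eF : Real.sqrt (a*b/((a+b+1)*(a+b)))
      = Real.sqrt a*Real.sqrt b/(Real.sqrt (a+b+1)*Real.sqrt (a+b)) := by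
    rw [Real.sqrt_div (by nlinarith), Real.sqrt_mul ha, Real.sqrt_mul (by linarith)]
  have eG : Real.sqrt ((a+1)*a/((a+b+1)*(a+b)))
      = Real.sqrt (a+1)*Real.sqrt a/(Real.sqrt (a+b+1)*Real.sqrt (a+b)) := by
    rw [Real.sqrt_div (by nlinarith), Real.sqrt_mul (by linarith), Real.sqrt_mul (by linarith)]
  have eH : Real.sqrt ((b+1)*b/((a+b+1)*(a+b)))
      = Real.sqrt (b+1)*Real.sqrt b/(Real.sqrt (a+b+1)*Real.sqrt (a+b)) := by
    rw [Real.sqrt_div (by nlinarith), Real.sqrt_mul (by linarith), Real.sqrt_mul (by linarith)]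
  have eS : Real.sqrt (2*(a+b+2)*(a+b))
      = Real.sqrt 2*Real.sqrt (a+b+2)*Real.sqrt (a+b) := by
    rw [Real.sqrt_mul (by linarith), Real.sqrt_mul (by norm_num)]
  have q2 : Real.sqrt 2 * Real.sqrt 2 = 2 := Real.mul_self_sqrt (by norm_num)
  have qa : Real.sqrt a * Real.sqrt a = a := Real.mul_self_sqrt ha
  have qa1 : Real.sqrt (a+1) * Real.sqrt (a+1) = a+1 := Real.mul_self_sqrt (by linarith)
  have qb : Real.sqrt b * Real.sqrt b = b := Real.mul_self_sqrt hb.le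
  have qb1 : Real.sqrt (b+1) * Real.sqrt (b+1) = b+1 := Real.mul_self_sqrt (by linarith)
  have n2 : Real.sqrt 2 ≠ 0 := by positivity
  have n0 : Real.sqrt (a+b) ≠ 0 := ne_of_gt (Real.sqrt_pos.mpr h0)
  have n1 : Real.sqrt (a+b+1) ≠ 0 := ne_of_gt (Real.sqrt_pos.mpr h1)
  have n2' : Real.sqrt (a+b+2) ≠ 0 := ne_of_gt (Real.sqrt_pos.mpr h2)
  rw [show (Matrix.of
    ![![Real.sqrt ((b+1)*b/((a+b+2)*(a+b+1))), 0, Real.sqrt (2*(a+1)*b/((a+b+2)*(a+b))), Real.sqrt ((a+1)*a/((a+b+1)*(a+b)))],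
      ![Real.sqrt ((a+1)*(b+1)/((a+b+2)*(a+b+1))), 1/Real.sqrt 2, -((b-a)/Real.sqrt (2*(a+b+2)*(a+b))), -Real.sqrt (a*b/((a+b+1)*(a+b)))],
      ![Real.sqrt ((a+1)*(b+1)/((a+b+2)*(a+b+1))), -(1/Real.sqrt 2), -((b-a)/Real.sqrt (2*(a+b+2)*(a+b))), -Real.sqrt (a*b/((a+b+1)*(a+b)))],
      ![Real.sqrt ((a+1)*a/((a+b+2)*(a+b+1))), 0, -Real.sqrt (2*a*(b+1)/((a+b+2)*(a+b))), Real.sqrt ((b+1)*b/((a+b+1)*(a+b)))]] : Matrix (Fin 4) (Fin 4) ℝ)ᵀ = _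
    from transpose_fin_four' _ _ _ _ _ _ _ _ _ _ _ _ _ _ _ _,
    mul_fin_four', one_fin_four']
  refine mat4_eq' ?_ ?_ ?_ ?_ ?_ ?_ ?_ ?_ ?_ ?_ ?_ ?_ ?_ ?_ ?_ ?_
  · rw [Real.mul_self_sqrt (by apply div_nonneg (mul_nonneg (by linarith) (by linarith)) (mul_nonneg (by linarith) (by linarith))),
        Real.mul_self_sqrt (by apply div_nonneg (mul_nonneg (by linarith) (by linarith)) (mul_nonneg (by linarith) (by linarith))),
        Real.mul_self_sqrt (by apply div_nonneg (mul_nonneg (by linarith) (by linarith)) (mul_nonneg (by linarith) (by linarith)))]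
    field_simp
    ring
  · ring
  · rw [eA, eB, eC, eD, eE, eS]
    field_simp
    linear_combination (Real.sqrt (a+1)*Real.sqrt (b+1)) *
      ((Real.sqrt b*Real.sqrt b - Real.sqrt a*Real.sqrt a) * q2 + 2*qb - 2*qa)
  · rw [eA, eB, eC, eF, eG, eH]
    ring
  · ring
  · rw [neg_mul_neg, div_mul_div_comm, Real.mul_self_sqrt (by norm_num : (0:ℝ) ≤ 2)]
    norm_num
  · ring
  · ring
  · rw [eA, eB, eC, eD, eE, eS]
    field_simp
    linear_combination (Real.sqrt (a+1)*Real.sqrt (b+1)) *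
      ((Real.sqrt b*Real.sqrt b - Real.sqrt a*Real.sqrt a) * q2 + 2*qb - 2*qa)
  · ring
  · rw [neg_mul_neg, neg_mul_neg, div_mul_div_comm,
        Real.mul_self_sqrt (by apply div_nonneg (mul_nonneg (by linarith) (by linarith)) (mul_nonneg (by linarith) (by linarith))),
        Real.mul_self_sqrt (mul_nonneg (mul_nonneg (by norm_num) (by linarith)) (by linarith)),
        Real.mul_self_sqrt (by apply div_nonneg (mul_nonneg (by linarith) (by linarith)) (mul_nonneg (by linarith) (by linarith)))]
    field_simp
    ring
  · rw [eD, eE, eF, eG, eH, eS]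
    field_simp
    linear_combination (Real.sqrt a*Real.sqrt b) *
      ((Real.sqrt (a+1)*Real.sqrt (a+1) - Real.sqrt (b+1)*Real.sqrt (b+1)) * q2 + 2*qa1 - 2*qb1)
  · rw [eA, eB, eC, eF, eG, eH]
    ring
  · ring
  · rw [eD, eE, eF, eG, eH, eS]
    field_simp
    linear_combination (Real.sqrt a*Real.sqrt b) *
      ((Real.sqrt (a+1)*Real.sqrt (a+1) - Real.sqrt (b+1)*Real.sqrt (b+1)) * q2 + 2*qa1 - 2*qb1)
  · rw [neg_mul_neg,
        Real.mul_self_sqrt (by apply div_nonneg (mul_nonneg (by linarith) (by linarith)) (mul_nonneg (by linarith) (by linarith))),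
        Real.mul_self_sqrt (by apply div_nonneg (mul_nonneg (by linarith) (by linarith)) (mul_nonneg (by linarith) (by linarith))),
        Real.mul_self_sqrt (by apply div_nonneg (mul_nonneg (by linarith) (by linarith)) (mul_nonneg (by linarith) (by linarith)))]
    field_simp
    ring

set_option maxHeartbeats 2000000 in
/-- The change-of-basis matrix is orthogonal: `MᵀM = I₄`, i.e. its columns form an
orthonormal basis of `ℝ⁴`. -/
theorem changeOfBasisMatrix_orthogonal (n k j : ℤ) (hj1 : 1 ≤ j) (hjk : j ≤ k)
    (hn : 2 * k < n) :
    (changeOfBasisMatrix n k j)ᵀ * changeOfBasisMatrix n k j = 1 := by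
  have hjk' : (j:ℝ) ≤ (k:ℝ) := by exact_mod_cast hjk
  have hn' : 2*(k:ℝ) + 1 ≤ (n:ℝ) := by exact_mod_cast hn
  have ha : (0:ℝ) ≤ (k:ℝ) - (j:ℝ) := by linarith
  have hab : ((k:ℝ) - (j:ℝ)) + 1 ≤ (n:ℝ) - (k:ℝ) - (j:ℝ) := by linarith
  have hM : changeOfBasisMatrix n k j =
      Matrix.of
      ![![Real.sqrt ((((n:ℝ)-(k:ℝ)-(j:ℝ))+1)*((n:ℝ)-(k:ℝ)-(j:ℝ))/((((k:ℝ)-(j:ℝ))+((n:ℝ)-(k:ℝ)-(j:ℝ))+2)*(((k:ℝ)-(j:ℝ))+((n:ℝ)-(k:ℝ)-(j:ℝ))+1))), 0,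
          Real.sqrt (2*(((k:ℝ)-(j:ℝ))+1)*((n:ℝ)-(k:ℝ)-(j:ℝ))/((((k:ℝ)-(j:ℝ))+((n:ℝ)-(k:ℝ)-(j:ℝ))+2)*(((k:ℝ)-(j:ℝ))+((n:ℝ)-(k:ℝ)-(j:ℝ))))),
          Real.sqrt ((((k:ℝ)-(j:ℝ))+1)*((k:ℝ)-(j:ℝ))/((((k:ℝ)-(j:ℝ))+((n:ℝ)-(k:ℝ)-(j:ℝ))+1)*(((k:ℝ)-(j:ℝ))+((n:ℝ)-(k:ℝ)-(j:ℝ)))))],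
        ![Real.sqrt ((((k:ℝ)-(j:ℝ))+1)*(((n:ℝ)-(k:ℝ)-(j:ℝ))+1)/((((k:ℝ)-(j:ℝ))+((n:ℝ)-(k:ℝ)-(j:ℝ))+2)*(((k:ℝ)-(j:ℝ))+((n:ℝ)-(k:ℝ)-(j:ℝ))+1))), 1/Real.sqrt 2,
          -((((n:ℝ)-(k:ℝ)-(j:ℝ))-((k:ℝ)-(j:ℝ)))/Real.sqrt (2*((((k:ℝ)-(j:ℝ))+((n:ℝ)-(k:ℝ)-(j:ℝ)))+2)*(((k:ℝ)-(j:ℝ))+((n:ℝ)-(k:ℝ)-(j:ℝ))))),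
          -Real.sqrt (((k:ℝ)-(j:ℝ))*((n:ℝ)-(k:ℝ)-(j:ℝ))/((((k:ℝ)-(j:ℝ))+((n:ℝ)-(k:ℝ)-(j:ℝ))+1)*(((k:ℝ)-(j:ℝ))+((n:ℝ)-(k:ℝ)-(j:ℝ)))))],
        ![Real.sqrt ((((k:ℝ)-(j:ℝ))+1)*(((n:ℝ)-(k:ℝ)-(j:ℝ))+1)/((((k:ℝ)-(j:ℝ))+((n:ℝ)-(k:ℝ)-(j:ℝ))+2)*(((k:ℝ)-(j:ℝ))+((n:ℝ)-(k:ℝ)-(j:ℝ))+1))), -(1/Real.sqrt 2),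
          -((((n:ℝ)-(k:ℝ)-(j:ℝ))-((k:ℝ)-(j:ℝ)))/Real.sqrt (2*((((k:ℝ)-(j:ℝ))+((n:ℝ)-(k:ℝ)-(j:ℝ)))+2)*(((k:ℝ)-(j:ℝ))+((n:ℝ)-(k:ℝ)-(j:ℝ))))),
          -Real.sqrt (((k:ℝ)-(j:ℝ))*((n:ℝ)-(k:ℝ)-(j:ℝ))/((((k:ℝ)-(j:ℝ))+((n:ℝ)-(k:ℝ)-(j:ℝ))+1)*(((k:ℝ)-(j:ℝ))+((n:ℝ)-(k:ℝ)-(j:ℝ)))))],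
        ![Real.sqrt ((((k:ℝ)-(j:ℝ))+1)*((k:ℝ)-(j:ℝ))/((((k:ℝ)-(j:ℝ))+((n:ℝ)-(k:ℝ)-(j:ℝ))+2)*(((k:ℝ)-(j:ℝ))+((n:ℝ)-(k:ℝ)-(j:ℝ))+1))), 0,
          -Real.sqrt (2*((k:ℝ)-(j:ℝ))*(((n:ℝ)-(k:ℝ)-(j:ℝ))+1)/((((k:ℝ)-(j:ℝ))+((n:ℝ)-(k:ℝ)-(j:ℝ))+2)*(((k:ℝ)-(j:ℝ))+((n:ℝ)-(k:ℝ)-(j:ℝ))))),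
          Real.sqrt ((((n:ℝ)-(k:ℝ)-(j:ℝ))+1)*((n:ℝ)-(k:ℝ)-(j:ℝ))/((((k:ℝ)-(j:ℝ))+((n:ℝ)-(k:ℝ)-(j:ℝ))+1)*(((k:ℝ)-(j:ℝ))+((n:ℝ)-(k:ℝ)-(j:ℝ)))))]] := by
    unfold changeOfBasisMatrix
    refine mat4_eq' ?_ ?_ ?_ ?_ ?_ ?_ ?_ ?_ ?_ ?_ ?_ ?_ ?_ ?_ ?_ ?_ <;> ring_nf
  rw [hM]
  exact key' ((k:ℝ)-(j:ℝ)) ((n:ℝ)-(k:ℝ)-(j:ℝ)) ha hab
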